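/- Let f : [0,1]^P → ℝ be twice continuously differentiable with ‖∇²f(x)‖ ≤ H for all x. Let a box B = [l,u] ⊆ [0,1]^P be split at threshold τ along coordinate p into children B_l and B_r, and let μ_l, μ_r be the averages of f under the uniform distributions on B_l and B_r respectively. Then |2(μ_r − μ_l)/(u_p − l_p) − ∂f/∂x_p(x)| ≤ 2H·‖u − l‖²/(u_p − l_p) for every x ∈ B. -/

import Mathlib

open MeasureTheory

section AuxTreeSplit

variable {P : ℕ}


variable {P : ℕ}

lemma aux_lip {f : (Fin P → ℝ) → ℝ} (hf : ContDiff ℝ 2 f) {H : ℝ}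
    (hH : ∀ x ∈ Set.Icc (0 : Fin P → ℝ) 1, ‖iteratedFDeriv ℝ 2 f x‖ ≤ H)
    {a b : Fin P → ℝ} (ha : a ∈ Set.Icc (0 : Fin P → ℝ) 1)
    (hb : b ∈ Set.Icc (0 : Fin P → ℝ) 1) :
    ‖fderiv ℝ f a - fderiv ℝ f b‖ ≤ H * ‖a - b‖ := by
  have hd : ContDiff ℝ 1 (fderiv ℝ f) := hf.fderiv_right (by norm_num)
  exact (convex_Icc _ _).norm_image_sub_le_of_norm_hasFDerivWithin_le
    (fun y _ => ((hd.differentiable (by norm_num)) y).hasFDerivAt.hasFDerivWithinAt)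
    (fun y hy => by
      calc ‖fderiv ℝ (fderiv ℝ f) y‖ = ‖iteratedFDeriv ℝ 2 f y‖ := by
            rw [← norm_iteratedFDeriv_zero (𝕜 := ℝ) (f := fderiv ℝ (fderiv ℝ f)) (x := y),
              norm_iteratedFDeriv_fderiv, norm_iteratedFDeriv_fderiv]
        _ ≤ H := hH y hy) hb ha

lemma aux_taylor {f : (Fin P → ℝ) → ℝ} (hf : ContDiff ℝ 2 f) {H : ℝ}
    (hH : ∀ y ∈ Set.Icc (0 : Fin P → ℝ) 1, ‖iteratedFDeriv ℝ 2 f y‖ ≤ H)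
    {l u : Fin P → ℝ} (hbox : Set.Icc l u ⊆ Set.Icc (0 : Fin P → ℝ) 1)
    {x z : Fin P → ℝ} (hx : x ∈ Set.Icc l u) (hz : z ∈ Set.Icc l u) :
    |f z - f x - fderiv ℝ f x (z - x)| ≤ H / 2 * ‖z - x‖ ^ 2 := by
  set v := z - x with hv
  have hmem : ∀ t ∈ Set.Icc (0 : ℝ) 1, x + t • v ∈ Set.Icc l u := fun t ht =>
    (convex_Icc l u).add_smul_sub_mem hx hz ht
  have hdiff : Differentiable ℝ f := hf.differentiable (by norm_num)
  have hφ : ∀ t : ℝ, HasDerivAt (fun t : ℝ => f (x + t • v)) (fderiv ℝ f (x + t • v) v) t := by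
    intro t
    have h1 : HasDerivAt (fun t : ℝ => x + t • v) v t := by
      simpa using ((hasDerivAt_id t).smul_const v).const_add x
    exact (hdiff (x + t • v)).hasFDerivAt.comp_hasDerivAt t h1
  have hcont : Continuous fun t : ℝ => fderiv ℝ f (x + t • v) v := by
    have h2 : Continuous fun t : ℝ => x + t • v := by continuity
    exact ((hf.continuous_fderiv (by norm_num)).comp h2).clm_apply continuous_const
  have key : f z - f x = ∫ t in (0:ℝ)..1, fderiv ℝ f (x + t • v) v := by
    have h := intervalIntegral.integral_eq_sub_of_hasDerivAt (f := fun t : ℝ => f (x + t • v))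
      (fun t _ => hφ t) (hcont.intervalIntegrable 0 1)
    rw [h]
    simp [hv]
  have hsplit : f z - f x - fderiv ℝ f x v
      = ∫ t in (0:ℝ)..1, (fderiv ℝ f (x + t • v) v - fderiv ℝ f x v) := by
    rw [intervalIntegral.integral_sub (hcont.intervalIntegrable 0 1)
      (intervalIntegrable_const), ← key]
    simp
  rw [hsplit]
  have hbnd : ∀ t ∈ Set.uIoc (0:ℝ) 1,
      ‖fderiv ℝ f (x + t • v) v - fderiv ℝ f x v‖ ≤ H * ‖v‖ ^ 2 * t := by
    intro t ht
    rw [Set.uIoc_of_le (by norm_num : (0:ℝ) ≤ 1)] at ht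
    have ht' : t ∈ Set.Icc (0:ℝ) 1 := ⟨le_of_lt ht.1, ht.2⟩
    have hmem' : x + t • v ∈ Set.Icc l u := hmem t ht'
    calc ‖fderiv ℝ f (x + t • v) v - fderiv ℝ f x v‖
        = ‖(fderiv ℝ f (x + t • v) - fderiv ℝ f x) v‖ := by
          rw [ContinuousLinearMap.sub_apply]
      _ ≤ ‖fderiv ℝ f (x + t • v) - fderiv ℝ f x‖ * ‖v‖ :=
          ContinuousLinearMap.le_opNorm _ _
      _ ≤ (H * ‖(x + t • v) - x‖) * ‖v‖ := by
          gcongr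
          exact aux_lip hf hH (hbox hmem') (hbox hx)
      _ = H * ‖v‖ ^ 2 * t := by
          have : ‖(x + t • v) - x‖ = t * ‖v‖ := by
            rw [add_sub_cancel_left, norm_smul, Real.norm_eq_abs, abs_of_nonneg ht'.1]
          rw [this]; ring
  have hH0 : 0 ≤ H := le_trans (norm_nonneg _) (hH 0 ⟨le_refl _, zero_le_one⟩)
  calc |∫ t in (0:ℝ)..1, (fderiv ℝ f (x + t • v) v - fderiv ℝ f x v)|
      = ‖∫ t in (0:ℝ)..1, (fderiv ℝ f (x + t • v) v - fderiv ℝ f x v)‖ :=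
        (Real.norm_eq_abs _).symm
    _ ≤ |∫ t in (0:ℝ)..1, H * ‖v‖ ^ 2 * t| :=
        intervalIntegral.norm_integral_le_abs_of_norm_le
          ((ae_restrict_iff' measurableSet_uIoc).2 (Filter.Eventually.of_forall hbnd))
          ((continuous_const.mul continuous_id).intervalIntegrable 0 1)
    _ = H / 2 * ‖v‖ ^ 2 := by
        rw [intervalIntegral.integral_const_mul, integral_id,
          abs_of_nonneg (by positivity)]
        ring

lemma aux_sym (a b : Fin P → ℝ) (L : (Fin P → ℝ) →L[ℝ] ℝ) :
    ∫ z in Set.Icc a b, L z = (volume (Set.Icc a b)).toReal * L ((2:ℝ)⁻¹ • (a + b)) := by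
  have hmp := Measure.measurePreserving_sub_left (volume : Measure (Fin P → ℝ)) (a + b)
  have hemb : MeasurableEmbedding (fun t : Fin P → ℝ => (a + b) - t) :=
    (MeasurableEquiv.subLeft (a + b)).measurableEmbedding
  have hpre : (fun t : Fin P → ℝ => (a + b) - t) ⁻¹' Set.Icc a b = Set.Icc a b := by
    ext z
    simp only [Set.mem_preimage, Set.mem_Icc, le_sub_iff_add_le, sub_le_iff_le_add]
    constructor
    · rintro ⟨h1, h2⟩
      exact ⟨(add_le_add_iff_right b).1 (by rwa [add_comm b z] at h2),
        (add_le_add_iff_left a).1 h1⟩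
    · rintro ⟨h1, h2⟩
      exact ⟨(add_le_add_iff_left a).2 h2, by rw [add_comm b z]; exact (add_le_add_iff_right b).2 h1⟩
  have hint : IntegrableOn (fun z => L z) (Set.Icc a b) volume :=
    L.continuous.continuousOn.integrableOn_compact isCompact_Icc
  have h1 : ∫ z in Set.Icc a b, L ((a + b) - z) = ∫ z in Set.Icc a b, L z := by
    conv_lhs => rw [← hpre]
    exact hmp.setIntegral_preimage_emb hemb (fun z => L z) (Set.Icc a b)
  have h2 : ∫ z in Set.Icc a b, L ((a + b) - z)
      = (volume (Set.Icc a b)).toReal * L (a + b) - ∫ z in Set.Icc a b, L z := by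
    simp only [map_sub]
    rw [integral_sub (integrableOn_const isCompact_Icc.measure_lt_top.ne :
      IntegrableOn (fun _ => L (a + b)) (Set.Icc a b) volume) hint,
      setIntegral_const, smul_eq_mul, measureReal_def]
  have h3 : L ((2:ℝ)⁻¹ • (a + b)) = (2:ℝ)⁻¹ * L (a + b) := by
    rw [L.map_smul, smul_eq_mul]
  rw [h3]
  have := h1.symm.trans h2
  linear_combination this / 2


lemma aux_norm_sq {l u z x : Fin P → ℝ} (hz : z ∈ Set.Icc l u) (hx : x ∈ Set.Icc l u) :
    ‖z - x‖ ^ 2 ≤ ∑ q, (u q - l q) ^ 2 := by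
  rcases isEmpty_or_nonempty (Fin P) with hP | hP
  · simp [Subsingleton.elim (z - x) 0]
  · obtain ⟨i, -, hi⟩ := Finset.exists_max_image Finset.univ (fun q => ‖(z - x) q‖)
      ⟨Classical.arbitrary (Fin P), Finset.mem_univ _⟩
    have h1 : ‖z - x‖ ≤ ‖(z - x) i‖ :=
      (pi_norm_le_iff_of_nonneg (norm_nonneg _)).2 fun j => hi j (Finset.mem_univ j)
    have h2 : ‖(z - x) i‖ ≤ u i - l i := by
      rw [Pi.sub_apply, Real.norm_eq_abs, abs_le]
      constructor
      · have := hx.2 i; have := hz.1 i; simp only [Pi.sub_apply] at *; linarith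
      · have := hz.2 i; have := hx.1 i; simp only [Pi.sub_apply] at *; linarith
    calc ‖z - x‖ ^ 2 ≤ (u i - l i) ^ 2 := by
          have h0 : (0:ℝ) ≤ ‖z - x‖ := norm_nonneg _
          nlinarith [h1.trans h2]
      _ ≤ ∑ q, (u q - l q) ^ 2 :=
          Finset.single_le_sum (f := fun q => (u q - l q) ^ 2) (fun q _ => sq_nonneg _) (Finset.mem_univ i)

lemma aux_avg {f : (Fin P → ℝ) → ℝ} (hf : ContDiff ℝ 2 f) {H : ℝ}
    (hH : ∀ y ∈ Set.Icc (0 : Fin P → ℝ) 1, ‖iteratedFDeriv ℝ 2 f y‖ ≤ H)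
    {l u : Fin P → ℝ} (hbox : Set.Icc l u ⊆ Set.Icc (0 : Fin P → ℝ) 1)
    {a b : Fin P → ℝ} (hsub : Set.Icc a b ⊆ Set.Icc l u)
    {x : Fin P → ℝ} (hx : x ∈ Set.Icc l u) :
    |(∫ z in Set.Icc a b, f z)
        - (volume (Set.Icc a b)).toReal
          * (f x + fderiv ℝ f x ((2:ℝ)⁻¹ • (a + b) - x))|
      ≤ H / 2 * (∑ q, (u q - l q) ^ 2) * (volume (Set.Icc a b)).toReal := by
  set L := fderiv ℝ f x with hL
  set V := (volume (Set.Icc a b)).toReal with hV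
  have hfc : Continuous f := hf.continuous
  have hVlt : volume (Set.Icc a b) < ⊤ := isCompact_Icc.measure_lt_top
  have hint_f : IntegrableOn f (Set.Icc a b) volume :=
    hfc.continuousOn.integrableOn_compact isCompact_Icc
  have hint_L : IntegrableOn (fun z => L z) (Set.Icc a b) volume :=
    L.continuous.continuousOn.integrableOn_compact isCompact_Icc
  have hint_c : ∀ c : ℝ, IntegrableOn (fun _ => c) (Set.Icc a b) volume :=
    fun c => integrableOn_const hVlt.ne
  have hS : ∫ z in Set.Icc a b, (f z - f x - L (z - x))
      = (∫ z in Set.Icc a b, f z) - V * (f x + L ((2:ℝ)⁻¹ • (a + b) - x)) := by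
    calc ∫ z in Set.Icc a b, (f z - f x - L (z - x))
        = ∫ z in Set.Icc a b, (f z - (f x - L x) - L z) := by
          congr 1; ext z; rw [map_sub]; ring
      _ = (∫ z in Set.Icc a b, f z) - V * (f x - L x) - V * L ((2:ℝ)⁻¹ • (a + b)) := by
          have h1 : IntegrableOn (fun z => f z - (f x - L x)) (Set.Icc a b) volume :=
            hint_f.sub (hint_c _)
          rw [integral_sub h1 hint_L, integral_sub hint_f (hint_c _),
            setIntegral_const, smul_eq_mul, measureReal_def, aux_sym]
      _ = (∫ z in Set.Icc a b, f z) - V * (f x + L ((2:ℝ)⁻¹ • (a + b) - x)) := by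
          rw [map_sub]; ring
  have hH0 : 0 ≤ H := le_trans (norm_nonneg _) (hH 0 ⟨le_refl _, zero_le_one⟩)
  have hb : ∀ z ∈ Set.Icc a b, ‖f z - f x - L (z - x)‖ ≤ H / 2 * (∑ q, (u q - l q) ^ 2) := by
    intro z hz
    calc ‖f z - f x - L (z - x)‖ = |f z - f x - L (z - x)| := rfl
      _ ≤ H / 2 * ‖z - x‖ ^ 2 := aux_taylor hf hH hbox hx (hsub hz)
      _ ≤ H / 2 * (∑ q, (u q - l q) ^ 2) :=
          mul_le_mul_of_nonneg_left (aux_norm_sq (hsub hz) hx) (by positivity)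
  have hmeas : AEStronglyMeasurable (fun z => f z - f x - L (z - x))
      (volume.restrict (Set.Icc a b)) :=
    ((hfc.sub continuous_const).sub
      (L.continuous.comp (continuous_id.sub continuous_const))).aestronglyMeasurable.restrict
  have := norm_setIntegral_le_of_norm_le_const hVlt hb
  rw [hS] at this
  exact this

end AuxTreeSplit

/-- Finite-difference-like estimate from a split node.  If `f` is `C²` on `[0,1]^P` with
Hessian operator norm bounded by `H`, the box `B = [l,u] ⊆ [0,1]^P` is split at `τ` along
coordinate `p` into children `B_l` (with `p`-th interval `[l_p, τ]`) and `B_r` (with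
`[τ, u_p]`), and `μ_l, μ_r` are the uniform averages of `f` over the children, then for every
`x ∈ B`, `|2(μ_r − μ_l)/(u_p − l_p) − ∂f/∂x_p(x)| ≤ 2H‖u − l‖²/(u_p − l_p)`. -/
theorem tree_split_partial_deriv_bound {P : ℕ} (f : (Fin P → ℝ) → ℝ)
    (hf : ContDiff ℝ 2 f) (H : ℝ)
    (hH : ∀ x ∈ Set.Icc (0 : Fin P → ℝ) 1, ‖iteratedFDeriv ℝ 2 f x‖ ≤ H)
    (l u : Fin P → ℝ) (hbox : Set.Icc l u ⊆ Set.Icc (0 : Fin P → ℝ) 1)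
    (hlu : ∀ q, l q < u q) (p : Fin P) (τ : ℝ) (hτ₁ : l p < τ) (hτ₂ : τ < u p)
    (x : Fin P → ℝ) (hx : x ∈ Set.Icc l u) :
    |2 * ((⨍ z in Set.Icc (Function.update l p τ) u, f z) -
          (⨍ z in Set.Icc l (Function.update u p τ), f z)) / (u p - l p)
        - fderiv ℝ f x (Pi.single p 1)| ≤
      2 * H * (∑ q, (u q - l q) ^ 2) / (u p - l p) := by
  have hH0 : 0 ≤ H := le_trans (norm_nonneg _) (hH 0 ⟨le_refl _, zero_le_one⟩)
  set d := u p - l p with hd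
  have hd0 : 0 < d := sub_pos.2 (hlu p)
  set D2 := ∑ q, (u q - l q) ^ 2 with hD2
  set L := fderiv ℝ f x with hLdef
  set ar := Function.update l p τ with har
  set bl := Function.update u p τ with hbl
  -- inclusions
  have hlar : l ≤ ar := by
    intro q; rcases eq_or_ne q p with rfl | h
    · simpa [har] using hτ₁.le
    · simp [har, Function.update_of_ne h]
  have hblu : bl ≤ u := by
    intro q; rcases eq_or_ne q p with rfl | h
    · simpa [hbl] using hτ₂.le
    · simp [hbl, Function.update_of_ne h]
  have hsub_r : Set.Icc ar u ⊆ Set.Icc l u := Set.Icc_subset_Icc hlar le_rfl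
  have hsub_l : Set.Icc l bl ⊆ Set.Icc l u := Set.Icc_subset_Icc le_rfl hblu
  -- positive side lengths
  have hpos_r : ∀ q, 0 < u q - ar q := by
    intro q; rcases eq_or_ne q p with rfl | h
    · simp only [har, Function.update_self]; linarith
    · simp only [har, Function.update_of_ne h]; linarith [hlu q]
  have hpos_l : ∀ q, 0 < bl q - l q := by
    intro q; rcases eq_or_ne q p with rfl | h
    · simp only [hbl, Function.update_self]; linarith
    · simp only [hbl, Function.update_of_ne h]; linarith [hlu q]
  -- positive volumes
  have volpos : ∀ a b : Fin P → ℝ, (∀ q, 0 < b q - a q) →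
      0 < (volume (Set.Icc a b)).toReal := by
    intro a b h
    refine ENNReal.toReal_pos ?_ isCompact_Icc.measure_lt_top.ne
    rw [Real.volume_Icc_pi, Finset.prod_ne_zero_iff]
    intro q _
    simp only [ne_eq, ENNReal.ofReal_eq_zero, not_le]
    exact h q
  have hVr : 0 < (volume (Set.Icc ar u)).toReal := volpos _ _ hpos_r
  have hVl : 0 < (volume (Set.Icc l bl)).toReal := volpos _ _ hpos_l
  -- average error bounds
  have havg : ∀ a b : Fin P → ℝ, 0 < (volume (Set.Icc a b)).toReal →
      Set.Icc a b ⊆ Set.Icc l u →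
      |(⨍ z in Set.Icc a b, f z) - (f x + L ((2:ℝ)⁻¹ • (a + b) - x))| ≤ H / 2 * D2 := by
    intro a b hV hsub
    have h0 := aux_avg hf hH hbox hsub hx
    rw [setAverage_eq, smul_eq_mul, measureReal_def]
    have heq : (volume (Set.Icc a b)).toReal⁻¹ * (∫ z in Set.Icc a b, f z)
        - (f x + L ((2:ℝ)⁻¹ • (a + b) - x))
        = (volume (Set.Icc a b)).toReal⁻¹ * ((∫ z in Set.Icc a b, f z)
            - (volume (Set.Icc a b)).toReal * (f x + L ((2:ℝ)⁻¹ • (a + b) - x))) := by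
      field_simp
    rw [heq, abs_mul, abs_inv, abs_of_pos hV]
    calc (volume (Set.Icc a b)).toReal⁻¹ * |(∫ z in Set.Icc a b, f z)
          - (volume (Set.Icc a b)).toReal * (f x + L ((2:ℝ)⁻¹ • (a + b) - x))|
        ≤ (volume (Set.Icc a b)).toReal⁻¹ * (H / 2 * D2 * (volume (Set.Icc a b)).toReal) :=
          mul_le_mul_of_nonneg_left h0 (inv_nonneg.2 hV.le)
      _ = H / 2 * D2 := by field_simp
  have hAr := havg ar u hVr hsub_r
  have hAl := havg l bl hVl hsub_l
  -- midpoint difference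
  have hmid : L ((2:ℝ)⁻¹ • (ar + u) - x) - L ((2:ℝ)⁻¹ • (l + bl) - x)
      = d / 2 * L (Pi.single p 1) := by
    rw [← map_sub]
    have hveq : (2:ℝ)⁻¹ • (ar + u) - x - ((2:ℝ)⁻¹ • (l + bl) - x)
        = (d / 2) • (Pi.single p 1 : Fin P → ℝ) := by
      funext q
      rcases eq_or_ne q p with rfl | h
      · simp only [Pi.sub_apply, Pi.smul_apply, Pi.add_apply, har, hbl,
          Function.update_self, Pi.single_eq_same, smul_eq_mul, hd]
        ring
      · simp only [Pi.sub_apply, Pi.smul_apply, Pi.add_apply, har, hbl,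
          Function.update_of_ne h, Pi.single_eq_of_ne h, smul_eq_mul]
        ring
    rw [hveq, L.map_smul, smul_eq_mul]
  -- combine
  have hdiff : |((⨍ z in Set.Icc ar u, f z) - (⨍ z in Set.Icc l bl, f z))
      - d / 2 * L (Pi.single p 1)| ≤ H * D2 := by
    have hrw : ((⨍ z in Set.Icc ar u, f z) - (⨍ z in Set.Icc l bl, f z))
        - d / 2 * L (Pi.single p 1)
        = ((⨍ z in Set.Icc ar u, f z) - (f x + L ((2:ℝ)⁻¹ • (ar + u) - x)))
          - ((⨍ z in Set.Icc l bl, f z) - (f x + L ((2:ℝ)⁻¹ • (l + bl) - x))) := by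
      rw [← hmid]; ring
    rw [hrw]
    calc |_ - _| ≤ |(⨍ z in Set.Icc ar u, f z) - (f x + L ((2:ℝ)⁻¹ • (ar + u) - x))|
          + |(⨍ z in Set.Icc l bl, f z) - (f x + L ((2:ℝ)⁻¹ • (l + bl) - x))| := abs_sub _ _
      _ ≤ H / 2 * D2 + H / 2 * D2 := add_le_add hAr hAl
      _ = H * D2 := by ring
  have hfin : 2 * ((⨍ z in Set.Icc ar u, f z) - (⨍ z in Set.Icc l bl, f z)) / d
      - L (Pi.single p 1)
      = (2 / d) * (((⨍ z in Set.Icc ar u, f z) - (⨍ z in Set.Icc l bl, f z))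
          - d / 2 * L (Pi.single p 1)) := by
    field_simp
  rw [hfin, abs_mul, abs_of_pos (by positivity : (0:ℝ) < 2 / d)]
  calc (2 / d) * |_| ≤ (2 / d) * (H * D2) :=
        mul_le_mul_of_nonneg_left hdiff (by positivity)
    _ = 2 * H * D2 / d := by ring
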